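/- Let k ≥ 0 and n ≥ 1. For each set partition π of Fin(2k) into at most n blocks, define the matrix X_π : (Fin k → Fin n) × (Fin k → Fin n) → ℂ by X_π(I, J) = 1 if the kernel partition of the concatenated tuple (I, J) : Fin(2k) → Fin n equals π, and X_π(I, J) = 0 otherwise. Then {X_π : π a set partition of Fin(2k) with at most n blocks} is a basis of the complex vector space of matrices f satisfying f(σ ∘ I, σ ∘ J) = f(I, J) for all σ ∈ S_n. -/

import Mathlib

noncomputable section
open scoped Classical

/-- The space `End_{S_n}(M_n^{⊗k})` in the standard basis: matrices
`f : (Fin k → Fin n) × (Fin k → Fin n) → ℂ` with `f (σ ∘ I, σ ∘ J) = f (I, J)`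
for all `σ ∈ S_n`. -/
def MEnd (n k : ℕ) : Submodule ℂ ((Fin k → Fin n) × (Fin k → Fin n) → ℂ) where
  carrier := {f | ∀ (σ : Equiv.Perm (Fin n)) (I J : Fin k → Fin n),
    f (⇑σ ∘ I, ⇑σ ∘ J) = f (I, J)}
  add_mem' := by
    intro a b ha hb σ I J
    simp only [Pi.add_apply, ha σ I J, hb σ I J]
  zero_mem' := by intro σ I J; rfl
  smul_mem' := by
    intro c a ha σ I J
    simp only [Pi.smul_apply, ha σ I J]


lemma ker_comp_inj {α β γ : Type*} (g : α → β) {e : β → γ} (he : Function.Injective e) :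
    Setoid.ker (e ∘ g) = Setoid.ker g :=
  Setoid.ext fun a b => by simp [Setoid.ker_def, he.eq_iff]

lemma comp_append {α β : Type*} {p q : ℕ} (f : α → β) (I : Fin p → α) (J : Fin q → α) :
    f ∘ Fin.append I J = Fin.append (f ∘ I) (f ∘ J) := by
  funext x
  induction x using Fin.addCases with
  | left i => simp [Fin.append_left]
  | right j => simp [Fin.append_right]

lemma exists_ker_rep {m n : ℕ} (π : Setoid (Fin m)) (hπ : Nat.card (Quotient π) ≤ n) :
    ∃ g : Fin m → Fin n, Setoid.ker g = π := by
  haveI : Fintype (Quotient π) := Fintype.ofFinite _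
  obtain ⟨e⟩ := Function.Embedding.nonempty_of_card_le (α := Quotient π) (β := Fin n)
    (by rw [← Nat.card_eq_fintype_card, ← Nat.card_eq_fintype_card, Nat.card_eq_fintype_card (α := Fin n), Fintype.card_fin]; exact hπ)
  refine ⟨e ∘ Quotient.mk'', ?_⟩
  rw [ker_comp_inj _ e.injective, Setoid.ker_mk_eq]

lemma card_ker_le {m n : ℕ} (F : Fin m → Fin n) :
    Nat.card (Quotient (Setoid.ker F)) ≤ n := by
  rw [Nat.card_congr (Setoid.quotientKerEquivRange F)]
  have h2 : Nat.card (Set.range F) ≤ Nat.card (Fin n) :=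
    Nat.card_le_card_of_injective _ Subtype.val_injective
  rwa [Nat.card_eq_fintype_card (α := Fin n), Fintype.card_fin] at h2

instance setoid_finite {α : Type*} [Finite α] : Finite (Setoid α) :=
  Finite.of_injective (fun s : Setoid α => (s.r : α → α → Prop))
    (fun a b h => Setoid.ext fun x y => by rw [show a.r = b.r from h])

lemma exists_perm_of_ker_eq {m n : ℕ} (g h : Fin m → Fin n)
    (hker : Setoid.ker g = Setoid.ker h) :
    ∃ σ : Equiv.Perm (Fin n), ∀ x, σ (g x) = h x := by
  have key : ∀ a b, g a = g b → h a = h b := fun a b hab => by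
    have h1 : Setoid.ker g a b := hab
    rw [hker] at h1; exact h1
  have key' : ∀ a b, h a = h b → g a = g b := fun a b hab => by
    have h1 : Setoid.ker h a b := hab
    rw [← hker] at h1; exact h1
  let f1 : {x // x ∈ Set.range g} → {x // x ∈ Set.range h} := fun y =>
    ⟨h (Classical.choose y.2), Set.mem_range_self _⟩
  let f2 : {x // x ∈ Set.range h} → {x // x ∈ Set.range g} := fun y =>
    ⟨g (Classical.choose y.2), Set.mem_range_self _⟩
  have hf1 : ∀ (x : Fin m) (hx : g x ∈ Set.range g), (f1 ⟨g x, hx⟩ : Fin n) = h x := by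
    intro x hx
    exact key _ _ (Classical.choose_spec hx)
  have hf2 : ∀ (x : Fin m) (hx : h x ∈ Set.range h), (f2 ⟨h x, hx⟩ : Fin n) = g x := by
    intro x hx
    exact key' _ _ (Classical.choose_spec hx)
  let e : {x // x ∈ Set.range g} ≃ {x // x ∈ Set.range h} := by
    refine ⟨f1, f2, ?_, ?_⟩
    · rintro ⟨y, hy⟩
      obtain ⟨x, rfl⟩ := hy
      apply Subtype.ext
      have h1 := hf1 x (Set.mem_range_self x)
      calc (f2 (f1 ⟨g x, Set.mem_range_self x⟩) : Fin n)
          = (f2 ⟨h x, Set.mem_range_self x⟩ : Fin n) :=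
            congrArg (fun z => (f2 z : Fin n)) (Subtype.ext h1)
        _ = g x := hf2 x _
    · rintro ⟨y, hy⟩
      obtain ⟨x, rfl⟩ := hy
      apply Subtype.ext
      have h1 := hf2 x (Set.mem_range_self x)
      calc (f1 (f2 ⟨h x, Set.mem_range_self x⟩) : Fin n)
          = (f1 ⟨g x, Set.mem_range_self x⟩ : Fin n) :=
            congrArg (fun z => (f1 z : Fin n)) (Subtype.ext h1)
        _ = h x := hf1 x _
  refine ⟨e.extendSubtype, fun x => ?_⟩
  rw [e.extendSubtype_apply_of_mem (g x) (Set.mem_range_self x)]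
  exact hf1 x _
/-- the matrices `X_π`, for `π` a set partition of a `2k`-element set
(here `Fin (k + k)`) with at most `n` blocks, where `X_π (I, J) = 1` if the kernel
partition of the concatenated tuple `(I, J) : Fin (k + k) → Fin n` equals `π` and `0`
otherwise, form a basis of `End_{S_n}(M_n^{⊗k})`. -/
theorem MEnd_basis (k n : ℕ) (hn : 1 ≤ n) :
    ∃ b : Module.Basis {π : Setoid (Fin (k + k)) // Nat.card (Quotient π) ≤ n} ℂ ↥(MEnd n k),
      ∀ (π : {π : Setoid (Fin (k + k)) // Nat.card (Quotient π) ≤ n})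
        (I J : Fin k → Fin n),
        (b π : (Fin k → Fin n) × (Fin k → Fin n) → ℂ) (I, J) =
          if Setoid.ker (Fin.append I J) = (π : Setoid (Fin (k + k))) then 1 else 0 := by
  set ι := {π : Setoid (Fin (k + k)) // Nat.card (Quotient π) ≤ n} with hι
  haveI : Fintype ι := Fintype.ofFinite _
  -- representatives
  choose g hg using fun π : ι => exists_ker_rep π.1 π.2
  let Ir : ι → Fin k → Fin n := fun π i => g π (Fin.castAdd k i)
  let Jr : ι → Fin k → Fin n := fun π i => g π (Fin.natAdd k i)
  have happ : ∀ π : ι, Fin.append (Ir π) (Jr π) = g π := fun π =>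
    Fin.append_castAdd_natAdd
  -- the candidate basis vectors
  have vmem : ∀ π : ι, (fun p : (Fin k → Fin n) × (Fin k → Fin n) =>
      if Setoid.ker (Fin.append p.1 p.2) = (π : Setoid (Fin (k + k))) then (1:ℂ) else 0)
      ∈ MEnd n k := by
    intro π σ I J
    simp only
    rw [← comp_append, ker_comp_inj _ σ.injective]
  let v : ι → MEnd n k := fun π =>
    ⟨fun p => if Setoid.ker (Fin.append p.1 p.2) = (π : Setoid (Fin (k + k)))
      then (1:ℂ) else 0, vmem π⟩
  have hv : ∀ (π : ι) (I J : Fin k → Fin n),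
      (v π : (Fin k → Fin n) × (Fin k → Fin n) → ℂ) (I, J) =
        if Setoid.ker (Fin.append I J) = (π : Setoid (Fin (k + k))) then 1 else 0 :=
    fun π I J => rfl
  have hker_rep : ∀ π : ι, Setoid.ker (Fin.append (Ir π) (Jr π)) = (π : Setoid (Fin (k + k))) :=
    fun π => by rw [happ π]; exact hg π
  -- evaluating v π' at the representative of π
  have heval : ∀ π π' : ι,
      (v π' : (Fin k → Fin n) × (Fin k → Fin n) → ℂ) (Ir π, Jr π) =
        if π' = π then 1 else 0 := by
    intro π π'
    rw [hv, hker_rep]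
    by_cases h : π' = π
    · simp [h]
    · rw [if_neg (fun he => h (Subtype.ext he.symm)), if_neg h]
  -- linear independence
  have hli : LinearIndependent ℂ v := by
    rw [Fintype.linearIndependent_iff]
    intro c hc π
    have h0 := congrArg (fun f : MEnd n k =>
      (f : (Fin k → Fin n) × (Fin k → Fin n) → ℂ) (Ir π, Jr π)) hc
    simp only [Submodule.coe_sum, Finset.sum_apply, Submodule.coe_smul, Pi.smul_apply,
      Submodule.coe_zero, Pi.zero_apply] at h0
    rw [show (∑ π' : ι, c π' • (v π' : (Fin k → Fin n) × (Fin k → Fin n) → ℂ) (Ir π, Jr π)) =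
        ∑ π' : ι, c π' • (if π' = π then (1:ℂ) else 0) from
      Finset.sum_congr rfl fun π' _ => by rw [heval]] at h0
    simp at h0
    rwa [Finset.sum_eq_single π (fun b _ hb => if_neg hb) (fun h => absurd (Finset.mem_univ π) h), if_pos rfl] at h0
  -- spanning
  have hsp : ⊤ ≤ Submodule.span ℂ (Set.range v) := by
    intro f _
    have hfe : f = ∑ π : ι, ((f : (Fin k → Fin n) × (Fin k → Fin n) → ℂ) (Ir π, Jr π)) • v π := by
      apply Subtype.ext
      funext p
      rw [show ((∑ π : ι, ((f : (Fin k → Fin n) × (Fin k → Fin n) → ℂ) (Ir π, Jr π)) • v π :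
          MEnd n k) : (Fin k → Fin n) × (Fin k → Fin n) → ℂ) p =
        ∑ π : ι, ((f : (Fin k → Fin n) × (Fin k → Fin n) → ℂ) (Ir π, Jr π)) •
          ((v π : (Fin k → Fin n) × (Fin k → Fin n) → ℂ) p) from by
        simp [Submodule.coe_sum, Finset.sum_apply]]
      set π0 : ι := ⟨Setoid.ker (Fin.append p.1 p.2), card_ker_le _⟩ with hπ0
      have hsum : (∑ π : ι, ((f : (Fin k → Fin n) × (Fin k → Fin n) → ℂ) (Ir π, Jr π)) •
          ((v π : (Fin k → Fin n) × (Fin k → Fin n) → ℂ) p)) =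
          (f : (Fin k → Fin n) × (Fin k → Fin n) → ℂ) (Ir π0, Jr π0) := by
        rw [Finset.sum_eq_single π0]
        · rw [show (v π0 : (Fin k → Fin n) × (Fin k → Fin n) → ℂ) p = 1 from if_pos rfl,
            smul_eq_mul, mul_one]
        · intro π' _ hne
          rw [show (v π' : (Fin k → Fin n) × (Fin k → Fin n) → ℂ) p = 0 from by
            show (if Setoid.ker (Fin.append p.1 p.2) = (π' : Setoid (Fin (k + k)))
              then (1:ℂ) else 0) = 0
            exact if_neg fun he => hne (Subtype.ext he).symm, smul_eq_mul, mul_zero]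
        · intro hmem
          exact absurd (Finset.mem_univ π0) hmem
      rw [hsum]
      -- now show f p = f (Ir π0, Jr π0)
      have hke : Setoid.ker (Fin.append (Ir π0) (Jr π0)) = Setoid.ker (Fin.append p.1 p.2) := by
        rw [hker_rep]
      obtain ⟨σ, hσ⟩ := exists_perm_of_ker_eq _ _ hke
      have hI : p.1 = ⇑σ ∘ Ir π0 := by
        funext i
        have := hσ (Fin.castAdd k i)
        simp only [Fin.append_left, Function.comp_apply] at this ⊢
        exact this.symm
      have hJ : p.2 = ⇑σ ∘ Jr π0 := by
        funext i
        have := hσ (Fin.natAdd k i)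
        simp only [Fin.append_right, Function.comp_apply] at this ⊢
        exact this.symm
      have hf := f.2 σ (Ir π0) (Jr π0)
      calc (f : (Fin k → Fin n) × (Fin k → Fin n) → ℂ) p
          = (f : (Fin k → Fin n) × (Fin k → Fin n) → ℂ) (⇑σ ∘ Ir π0, ⇑σ ∘ Jr π0) := by
            rw [show p = (⇑σ ∘ Ir π0, ⇑σ ∘ Jr π0) from Prod.ext hI hJ]
        _ = _ := hf
    rw [hfe]
    exact Submodule.sum_mem _ fun π _ =>
      Submodule.smul_mem _ _ (Submodule.subset_span (Set.mem_range_self π))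
  refine ⟨Module.Basis.mk hli hsp, fun π I J => ?_⟩
  rw [Module.Basis.mk_apply]

end
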